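/- Fix integers k ≥ 1, m ≥ 1 and N ≥ 1. Let ρ be an N×N complex positive semidefinite matrix with trace 1, and for each string p on k sites let α_p ∈ ℝ and let A_p be an N×N Hermitian matrix. Then the sum Σ_{(p,q) compatible} α_p α_q m^{|supp(p) ∩ supp(q)|} tr(ρ A_p A_q), taken over ordered pairs of compatible strings, is a nonnegative real number and satisfies Σ_{(p,q) compatible} α_p α_q m^{|supp(p) ∩ supp(q)|} tr(ρ A_p A_q) ≤ (m+1)^k · Σ_p α_p² ‖A_p‖_∞², where ‖·‖_∞ denotes the spectral (operator) norm. -/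

import Mathlib

set_option synthInstance.maxHeartbeats 1000000
set_option maxHeartbeats 4000000

open scoped ComplexOrder

/-- The support of a string, as a finset. -/
def supp {n m : ℕ} (q : Fin n → Option (Fin m)) : Finset (Fin n) :=
  Finset.univ.filter (fun i : Fin n => q i ≠ none)

/-- Two strings are compatible iff they agree on the intersection of their supports. -/
def compatible {n m : ℕ} (p q : Fin n → Option (Fin m)) : Prop :=
  ∀ i : Fin n, p i ≠ none → q i ≠ none → p i = q i

instance {n m : ℕ} (p q : Fin n → Option (Fin m)) : Decidable (compatible p q) :=
  inferInstanceAs (Decidable (∀ i : Fin n, p i ≠ none → q i ≠ none → p i = q i))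

namespace Aux

open Matrix

variable {N : ℕ}


lemma trace_nonneg_of_psd (M : Matrix (Fin N) (Fin N) ℂ) (h : M.PosSemidef) :
    0 ≤ M.trace := by
  rw [Matrix.trace]
  apply Finset.sum_nonneg
  intro i _
  have := h.dotProduct_mulVec_nonneg (Pi.single i 1)
  simpa [Matrix.mulVec_single, Matrix.diag, dotProduct, Pi.single_apply,
    apply_ite, ite_mul, Finset.sum_ite_eq'] using this

lemma trace_mul_nonneg_of_psd (ρ M : Matrix (Fin N) (Fin N) ℂ)
    (hρ : ρ.PosSemidef) (hM : M.PosSemidef) : 0 ≤ (ρ * M).trace := by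
  classical
  open scoped MatrixOrder in
  obtain ⟨S, hSh, h1⟩ : ∃ S : Matrix (Fin N) (Fin N) ℂ, Sᴴ = S ∧ ρ = S * S :=
    ⟨CFC.sqrt ρ, (Matrix.nonneg_iff_posSemidef.mp (CFC.sqrt_nonneg ρ)).1.eq,
      (CFC.sqrt_mul_sqrt_self ρ (Matrix.nonneg_iff_posSemidef.mpr hρ)).symm⟩
  have h2 : (ρ * M).trace = (S * M * S).trace := by
    rw [h1, Matrix.mul_assoc, Matrix.trace_mul_comm]
  rw [h2]
  have h3 : (S * M * Sᴴ).PosSemidef := hM.mul_mul_conjTranspose_same _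
  rw [hSh] at h3
  exact trace_nonneg_of_psd _ h3


lemma dot_self_eq (x : Fin N → ℂ) :
    dotProduct (star x) x
      = ((‖(WithLp.equiv 2 (Fin N → ℂ)).symm x‖ ^ 2 : ℝ) : ℂ) := by
  have h : ‖(WithLp.equiv 2 (Fin N → ℂ)).symm x‖ ^ 2 = ∑ i, ‖x i‖ ^ 2 := by
    rw [EuclideanSpace.norm_eq, Real.sq_sqrt]
    · rfl
    · positivity
  rw [h]
  push_cast
  simp [dotProduct, Complex.conj_mul', Complex.ofReal_pow]

lemma psd_of_opnorm (H : Matrix (Fin N) (Fin N) ℂ) (hH : H.IsHermitian) :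
    ((((‖Matrix.toEuclideanCLM (𝕜 := ℂ) H‖ ^ 2 : ℝ)) : ℂ) • 1 - H * H).PosSemidef := by
  set c : ℝ := ‖Matrix.toEuclideanCLM (𝕜 := ℂ) H‖ with hc
  refine Matrix.PosSemidef.of_dotProduct_mulVec_nonneg ?_ ?_
  · simp [Matrix.IsHermitian, Matrix.conjTranspose_smul, Matrix.conjTranspose_sub,
      Matrix.conjTranspose_mul, hH.eq, Complex.conj_ofReal]
  · intro x
    have hz : star x ⬝ᵥ ((H * H) *ᵥ x) = star (H *ᵥ x) ⬝ᵥ (H *ᵥ x) := by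
      rw [← Matrix.mulVec_mulVec, Matrix.dotProduct_mulVec, Matrix.star_mulVec, hH.eq]
    have hsub : star x ⬝ᵥ (((c ^ 2 : ℝ) : ℂ) • 1 - H * H) *ᵥ x
        = ((c ^ 2 : ℝ) : ℂ) * (star x ⬝ᵥ x) - star (H *ᵥ x) ⬝ᵥ (H *ᵥ x) := by
      rw [Matrix.sub_mulVec, dotProduct_sub, hz, Matrix.smul_mulVec,
        Matrix.one_mulVec, dotProduct_smul]
      simp [smul_eq_mul]
    rw [hsub, dot_self_eq, dot_self_eq]
    have key : ‖(WithLp.equiv 2 (Fin N → ℂ)).symm (H *ᵥ x)‖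
        ≤ c * ‖(WithLp.equiv 2 (Fin N → ℂ)).symm x‖ := by
      have := (Matrix.toEuclideanCLM (𝕜 := ℂ) H).le_opNorm
        ((WithLp.equiv 2 (Fin N → ℂ)).symm x)
      simpa [WithLp.equiv_symm_apply, Matrix.toEuclideanCLM_toLp, Matrix.toLin'_apply] using this
    have h2 : ‖(WithLp.equiv 2 (Fin N → ℂ)).symm (H *ᵥ x)‖ ^ 2
        ≤ c ^ 2 * ‖(WithLp.equiv 2 (Fin N → ℂ)).symm x‖ ^ 2 := by
      rw [← mul_pow]
      exact pow_le_pow_left₀ (norm_nonneg _) key 2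
    rw [← Complex.ofReal_mul, ← Complex.ofReal_sub]
    rw [Complex.zero_le_real]
    linarith

lemma key_trace (ρ : Matrix (Fin N) (Fin N) ℂ) (hρ : ρ.PosSemidef) (hρtr : ρ.trace = 1)
    (H : Matrix (Fin N) (Fin N) ℂ) (hH : H.IsHermitian) :
    (ρ * H * H).trace.im = 0 ∧ 0 ≤ (ρ * H * H).trace.re ∧
      (ρ * H * H).trace.re ≤ ‖Matrix.toEuclideanCLM (𝕜 := ℂ) H‖ ^ 2 := by
  set c : ℝ := ‖Matrix.toEuclideanCLM (𝕜 := ℂ) H‖ with hc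
  have hHH : (H * H).PosSemidef := by
    have := Matrix.posSemidef_conjTranspose_mul_self H
    rwa [hH.eq] at this
  have h1 : 0 ≤ (ρ * H * H).trace := by
    rw [Matrix.mul_assoc]
    exact trace_mul_nonneg_of_psd _ _ hρ hHH
  have h2 : 0 ≤ (ρ * (((c ^ 2 : ℝ) : ℂ) • 1 - H * H)).trace :=
    trace_mul_nonneg_of_psd _ _ hρ (psd_of_opnorm H hH)
  have h3 : (ρ * (((c ^ 2 : ℝ) : ℂ) • 1 - H * H)).trace
      = ((c ^ 2 : ℝ) : ℂ) - (ρ * H * H).trace := by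
    rw [Matrix.mul_sub, Matrix.trace_sub, Matrix.mul_smul, Matrix.mul_one,
      Matrix.trace_smul, hρtr, Matrix.mul_assoc]
    simp
  rw [h3] at h2
  rw [Complex.le_def] at h1 h2
  simp only [Complex.zero_re, Complex.zero_im, Complex.sub_re, Complex.sub_im,
    Complex.ofReal_re, Complex.ofReal_im] at h1 h2
  refine ⟨h1.2.symm, h1.1, by linarith [h2.1]⟩


section Comb

variable {k m : ℕ}


/-- indicator that `s` extends `p` -/
def w (p : Fin k → Option (Fin m)) (s : Fin k → Fin m) : ℝ :=
  if ∀ i a, p i = some a → s i = a then 1 else 0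

lemma w_nonneg (p : Fin k → Option (Fin m)) (s : Fin k → Fin m) : 0 ≤ w p s := by
  unfold w; split <;> norm_num

lemma w_prod (p : Fin k → Option (Fin m)) (s : Fin k → Fin m) :
    w p s = ∏ i, (if ∀ a, p i = some a → s i = a then (1:ℝ) else 0) := by
  rw [Finset.prod_boole, w]
  congr 1
  simp

lemma pow_supp (p : Fin k → Option (Fin m)) :
    (m:ℝ) ^ (supp p).card = ∏ i, (if p i = none then (1:ℝ) else m) := by
  rw [Finset.prod_ite, Finset.prod_const, Finset.prod_const, one_pow, one_mul]
  congr 1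

lemma pow_inter (p q : Fin k → Option (Fin m)) :
    (m:ℝ) ^ (supp p ∩ supp q).card
      = ∏ i, (if p i ≠ none ∧ q i ≠ none then (m:ℝ) else 1) := by
  rw [Finset.prod_ite, Finset.prod_const, Finset.prod_const, one_pow, mul_one]
  congr 1
  unfold supp
  rw [← Finset.filter_and]

lemma compat_ite (p q : Fin k → Option (Fin m)) :
    (if compatible p q then (1:ℝ) else 0)
      = ∏ i, (if p i ≠ none → q i ≠ none → p i = q i then (1:ℝ) else 0) := by
  rw [Finset.prod_boole]
  congr 1
  simp [compatible]

lemma C1 (p q : Fin k → Option (Fin m)) :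
    (m:ℝ) ^ (supp p).card * (m:ℝ) ^ (supp q).card * (∑ s : Fin k → Fin m, w p s * w q s)
      = (if compatible p q then (m:ℝ) ^ ((supp p ∩ supp q).card) else 0) * (m:ℝ) ^ k := by
  have hsum : (∑ s : Fin k → Fin m, w p s * w q s)
      = ∏ i, ∑ a : Fin m, ((if ∀ b, p i = some b → a = b then (1:ℝ) else 0)
          * (if ∀ b, q i = some b → a = b then (1:ℝ) else 0)) := by
    rw [Fintype.prod_sum]
    apply Finset.sum_congr rfl
    intro s _
    rw [w_prod, w_prod, ← Finset.prod_mul_distrib]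
  have hrhs : (if compatible p q then (m:ℝ) ^ ((supp p ∩ supp q).card) else 0)
      = (if compatible p q then (1:ℝ) else 0) * (m:ℝ) ^ ((supp p ∩ supp q).card) := by
    split <;> simp
  rw [hsum, hrhs, pow_supp, pow_supp, pow_inter, compat_ite]
  have hk : (m:ℝ) ^ k = ∏ _i : Fin k, (m:ℝ) := by
    simp
  rw [hk, ← Finset.prod_mul_distrib, ← Finset.prod_mul_distrib, ← Finset.prod_mul_distrib,
    ← Finset.prod_mul_distrib]
  apply Finset.prod_congr rfl
  intro i _
  rcases hp : p i with _ | a <;> rcases hq : q i with _ | b <;> simp [hp, hq]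
  exact if_congr eq_comm rfl rfl

lemma C2 (s : Fin k → Fin m) :
    (∑ p : Fin k → Option (Fin m), (m:ℝ) ^ (supp p).card * w p s) = ((m:ℝ) + 1) ^ k := by
  have h : ∀ p : Fin k → Option (Fin m), (m:ℝ) ^ (supp p).card * w p s
      = ∏ i, ((if p i = none then (1:ℝ) else m)
          * (if ∀ a, p i = some a → s i = a then (1:ℝ) else 0)) := by
    intro p
    rw [pow_supp, w_prod, ← Finset.prod_mul_distrib]
  simp only [h]
  rw [← Fintype.prod_sum (fun (i : Fin k) (o : Option (Fin m)) =>
    (if o = none then (1:ℝ) else m) * (if ∀ a, o = some a → s i = a then (1:ℝ) else 0))]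
  have h2 : ∀ i : Fin k, (∑ o : Option (Fin m), ((if o = none then (1:ℝ) else m)
      * (if ∀ a, o = some a → s i = a then (1:ℝ) else 0))) = (m:ℝ) + 1 := by
    intro i
    rw [Fintype.sum_option]
    simp [eq_comm, add_comm]
  simp only [h2]
  simp

lemma C3 (p : Fin k → Option (Fin m)) :
    (m:ℝ) ^ (supp p).card * (∑ s : Fin k → Fin m, w p s) = (m:ℝ) ^ k := by
  have h : (∑ s : Fin k → Fin m, w p s)
      = ∏ i, ∑ a : Fin m, (if ∀ b, p i = some b → a = b then (1:ℝ) else 0) := by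
    rw [Fintype.prod_sum]
    apply Finset.sum_congr rfl
    intro s _
    rw [w_prod]
  rw [h, pow_supp, ← Finset.prod_mul_distrib]
  have : ∀ i : Fin k, ((if p i = none then (1:ℝ) else m)
      * ∑ a : Fin m, (if ∀ b, p i = some b → a = b then (1:ℝ) else 0)) = m := by
    intro i
    rcases hp : p i with _ | a <;> simp [hp]
  simp only [this]
  simp


end Comb

end Aux

theorem stmt_6 (k m N : ℕ) (hk : 1 ≤ k) (hm : 1 ≤ m) (hN : 1 ≤ N)
    (ρ : Matrix (Fin N) (Fin N) ℂ) (hρ : ρ.PosSemidef) (hρtr : ρ.trace = 1)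
    (α : (Fin k → Option (Fin m)) → ℝ)
    (A : (Fin k → Option (Fin m)) → Matrix (Fin N) (Fin N) ℂ)
    (hA : ∀ p, (A p).IsHermitian) :
    (∑ pq ∈ (Finset.univ :
        Finset ((Fin k → Option (Fin m)) × (Fin k → Option (Fin m)))).filter
        (fun pq => compatible pq.1 pq.2),
      ((α pq.1 * α pq.2 * (m : ℝ) ^ (supp pq.1 ∩ supp pq.2).card : ℝ) : ℂ) *
        (ρ * A pq.1 * A pq.2).trace).im = 0 ∧
    0 ≤ (∑ pq ∈ (Finset.univ :
        Finset ((Fin k → Option (Fin m)) × (Fin k → Option (Fin m)))).filter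
        (fun pq => compatible pq.1 pq.2),
      ((α pq.1 * α pq.2 * (m : ℝ) ^ (supp pq.1 ∩ supp pq.2).card : ℝ) : ℂ) *
        (ρ * A pq.1 * A pq.2).trace).re ∧
    (∑ pq ∈ (Finset.univ :
        Finset ((Fin k → Option (Fin m)) × (Fin k → Option (Fin m)))).filter
        (fun pq => compatible pq.1 pq.2),
      ((α pq.1 * α pq.2 * (m : ℝ) ^ (supp pq.1 ∩ supp pq.2).card : ℝ) : ℂ) *
        (ρ * A pq.1 * A pq.2).trace).re ≤
      ((m : ℝ) + 1) ^ k *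
        ∑ p : Fin k → Option (Fin m),
          α p ^ 2 * ‖Matrix.toEuclideanCLM (𝕜 := ℂ) (A p)‖ ^ 2 := by
  set S : ℂ := ∑ pq ∈ (Finset.univ :
        Finset ((Fin k → Option (Fin m)) × (Fin k → Option (Fin m)))).filter
        (fun pq => compatible pq.1 pq.2),
      ((α pq.1 * α pq.2 * (m : ℝ) ^ (supp pq.1 ∩ supp pq.2).card : ℝ) : ℂ) *
        (ρ * A pq.1 * A pq.2).trace with hS
  set β : (Fin k → Option (Fin m)) → (Fin k → Fin m) → ℝ :=
    fun p s => α p * (m:ℝ) ^ (supp p).card * Aux.w p s with hβ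
  set C : (Fin k → Fin m) → Matrix (Fin N) (Fin N) ℂ :=
    fun s => ∑ p, ((β p s : ℝ) : ℂ) • A p with hC
  -- C s is Hermitian
  have hC_herm : ∀ s, (C s).IsHermitian := by
    intro s
    unfold Matrix.IsHermitian
    rw [hC]
    rw [Matrix.conjTranspose_sum]
    apply Finset.sum_congr rfl
    intro p _
    rw [Matrix.conjTranspose_smul, (hA p).eq, Complex.star_def, Complex.conj_ofReal]
  -- expansion of the trace
  have expand : ∀ s, (ρ * C s * C s).trace
      = ∑ p, ∑ q, ((β p s * β q s : ℝ) : ℂ) * (ρ * A p * A q).trace := by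
    intro s
    rw [hC]
    simp only [Finset.mul_sum, Finset.sum_mul, Matrix.mul_smul, Matrix.smul_mul,
      Matrix.trace_sum, Matrix.trace_smul, smul_smul, smul_eq_mul]
    conv_rhs => rw [Finset.sum_comm]
    apply Finset.sum_congr rfl; intro p _
    apply Finset.sum_congr rfl; intro q _
    push_cast
    ring
  -- sum over s
  have hs2 : ∀ p q : Fin k → Option (Fin m), (∑ s : Fin k → Fin m, β p s * β q s)
      = α p * α q * ((if compatible p q then (m:ℝ) ^ ((supp p ∩ supp q).card) else 0)
          * (m:ℝ) ^ k) := by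
    intro p q
    have h1 : (∑ s : Fin k → Fin m, β p s * β q s)
        = α p * α q * ((m:ℝ) ^ (supp p).card * (m:ℝ) ^ (supp q).card
            * ∑ s : Fin k → Fin m, Aux.w p s * Aux.w q s) := by
      rw [Finset.mul_sum, Finset.mul_sum]
      apply Finset.sum_congr rfl
      intro s _
      rw [hβ]; ring
    rw [h1, Aux.C1]
  have main_id : (∑ s : Fin k → Fin m, (ρ * C s * C s).trace) = (((m:ℝ) ^ k : ℝ) : ℂ) * S := by
    simp only [expand]
    rw [Finset.sum_comm]
    have inner : ∀ p : Fin k → Option (Fin m),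
        (∑ s : Fin k → Fin m, ∑ q, ((β p s * β q s : ℝ) : ℂ) * (ρ * A p * A q).trace)
        = ∑ q, ((α p * α q * ((if compatible p q then (m:ℝ) ^ ((supp p ∩ supp q).card) else 0)
            * (m:ℝ) ^ k) : ℝ) : ℂ) * (ρ * A p * A q).trace := by
      intro p
      rw [Finset.sum_comm]
      apply Finset.sum_congr rfl
      intro q _
      have hcast : (∑ x : Fin k → Fin m, ((β p x * β q x : ℝ) : ℂ))
          = ((α p * α q * ((if compatible p q then (m:ℝ) ^ ((supp p ∩ supp q).card) else 0)
              * (m:ℝ) ^ k) : ℝ) : ℂ) := by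
        rw [← Complex.ofReal_sum, hs2 p q]
      rw [← Finset.sum_mul, hcast]
    simp only [inner]
    rw [hS, Finset.sum_filter, Fintype.sum_prod_type, Finset.mul_sum]
    apply Finset.sum_congr rfl; intro p _
    rw [Finset.mul_sum]
    apply Finset.sum_congr rfl; intro q _
    by_cases hpq : compatible p q <;> simp [hpq] <;> push_cast <;> ring
  -- the real values r s
  have key := fun s => Aux.key_trace ρ hρ hρtr (C s) (hC_herm s)
  set r : (Fin k → Fin m) → ℝ := fun s => (ρ * C s * C s).trace.re with hr
  have sum_eq : (∑ s : Fin k → Fin m, (ρ * C s * C s).trace)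
      = (((∑ s : Fin k → Fin m, r s : ℝ)) : ℂ) := by
    rw [Complex.ofReal_sum]
    apply Finset.sum_congr rfl
    intro s _
    exact Complex.ext (by simp [hr]) (by simp [hr, (key s).1])
  have hmain : (((m:ℝ) ^ k : ℝ) : ℂ) * S = ((∑ s : Fin k → Fin m, r s : ℝ) : ℂ) :=
    main_id ▸ sum_eq
  have mpos : (0:ℝ) < (m:ℝ) ^ k := by positivity
  have him : S.im = 0 := by
    have := congrArg Complex.im hmain
    simp only [Complex.mul_im, Complex.ofReal_re, Complex.ofReal_im, zero_mul, add_zero,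
      mul_zero, zero_add] at this
    rcases mul_eq_zero.mp this with h | h
    · exact absurd h mpos.ne'
    · exact h
  have hre : (m:ℝ) ^ k * S.re = ∑ s : Fin k → Fin m, r s := by
    have := congrArg Complex.re hmain
    simp only [Complex.mul_re, Complex.ofReal_re, Complex.ofReal_im, zero_mul,
      sub_zero] at this
    exact this
  -- nonnegativity
  have Rnonneg : 0 ≤ ∑ s : Fin k → Fin m, r s :=
    Finset.sum_nonneg fun s _ => (key s).2.1
  have hSre_nonneg : 0 ≤ S.re := by
    nlinarith [hre, Rnonneg, mpos]
  -- the bound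
  set G : (Fin k → Fin m) → ℝ :=
    fun s => ∑ p, α p ^ 2 * (m:ℝ) ^ (supp p).card * Aux.w p s
      * ‖Matrix.toEuclideanCLM (𝕜 := ℂ) (A p)‖ ^ 2 with hG
  have hnorm : ∀ s, ‖Matrix.toEuclideanCLM (𝕜 := ℂ) (C s)‖
      ≤ ∑ p, |β p s| * ‖Matrix.toEuclideanCLM (𝕜 := ℂ) (A p)‖ := by
    intro s
    have hmap : Matrix.toEuclideanCLM (𝕜 := ℂ) (C s)
        = ∑ p, ((β p s : ℝ) : ℂ) • Matrix.toEuclideanCLM (𝕜 := ℂ) (A p) := by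
      rw [hC]
      rw [map_sum]
      apply Finset.sum_congr rfl
      intro p _
      rw [_root_.map_smul]
    rw [hmap]
    refine (norm_sum_le _ _).trans (le_of_eq ?_)
    apply Finset.sum_congr rfl
    intro p _
    have := norm_smul ((β p s : ℝ) : ℂ) (Matrix.toEuclideanCLM (𝕜 := ℂ) (A p))
    simpa using this
  have hrG : ∀ s, r s ≤ ((m:ℝ) + 1) ^ k * G s := by
    intro s
    have h1 : r s ≤ ‖Matrix.toEuclideanCLM (𝕜 := ℂ) (C s)‖ ^ 2 := (key s).2.2
    have h2 : ‖Matrix.toEuclideanCLM (𝕜 := ℂ) (C s)‖ ^ 2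
        ≤ (∑ p, |β p s| * ‖Matrix.toEuclideanCLM (𝕜 := ℂ) (A p)‖) ^ 2 := by
      apply pow_le_pow_left₀ (norm_nonneg _) (hnorm s)
    have h3 : (∑ p, |β p s| * ‖Matrix.toEuclideanCLM (𝕜 := ℂ) (A p)‖) ^ 2
        ≤ (∑ p, (m:ℝ) ^ (supp p).card * Aux.w p s) * G s := by
      rw [hG]
      refine Finset.sum_sq_le_sum_mul_sum_of_sq_eq_mul Finset.univ ?_ ?_ ?_
      · intro p _
        exact mul_nonneg (by positivity) (Aux.w_nonneg p s)
      · intro p _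
        have := Aux.w_nonneg p s
        positivity
      · intro p _
        rw [mul_pow, sq_abs, hβ]
        ring
    rw [Aux.C2 s] at h3
    calc r s ≤ _ := h1
      _ ≤ _ := h2
      _ ≤ _ := h3
  have hGsum : (∑ s : Fin k → Fin m, G s)
      = (m:ℝ) ^ k * ∑ p, α p ^ 2 * ‖Matrix.toEuclideanCLM (𝕜 := ℂ) (A p)‖ ^ 2 := by
    rw [hG, Finset.sum_comm, Finset.mul_sum]
    apply Finset.sum_congr rfl
    intro p _
    have : (∑ s : Fin k → Fin m, α p ^ 2 * (m:ℝ) ^ (supp p).card * Aux.w p s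
        * ‖Matrix.toEuclideanCLM (𝕜 := ℂ) (A p)‖ ^ 2)
        = α p ^ 2 * ‖Matrix.toEuclideanCLM (𝕜 := ℂ) (A p)‖ ^ 2
          * ((m:ℝ) ^ (supp p).card * ∑ s : Fin k → Fin m, Aux.w p s) := by
      rw [Finset.mul_sum, Finset.mul_sum]
      apply Finset.sum_congr rfl
      intro s _
      ring
    rw [this, Aux.C3]
    ring
  have Rbound : (∑ s : Fin k → Fin m, r s)
      ≤ ((m:ℝ) + 1) ^ k * ((m:ℝ) ^ k
          * ∑ p, α p ^ 2 * ‖Matrix.toEuclideanCLM (𝕜 := ℂ) (A p)‖ ^ 2) := by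
    calc (∑ s : Fin k → Fin m, r s) ≤ ∑ s : Fin k → Fin m, ((m:ℝ) + 1) ^ k * G s :=
          Finset.sum_le_sum fun s _ => hrG s
      _ = ((m:ℝ) + 1) ^ k * ∑ s : Fin k → Fin m, G s := by rw [Finset.mul_sum]
      _ = _ := by rw [hGsum]
  refine ⟨him, hSre_nonneg, ?_⟩
  rw [← hre] at Rbound
  have := (mul_le_mul_iff_right₀ mpos).mp (by linarith [Rbound] :
    (m:ℝ) ^ k * S.re ≤ (m:ℝ) ^ k * (((m:ℝ) + 1) ^ k
      * ∑ p, α p ^ 2 * ‖Matrix.toEuclideanCLM (𝕜 := ℂ) (A p)‖ ^ 2))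
  exact this
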